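/- Let m₂, m₃, f, φ : ℝ → ℝ satisfy m₃ = f, m₂' = φ·m₃, and m₃' = −φ·m₂ on ℝ (the geodesic Darboux system m₁' = m₃ − f, m₂' = φ·m₃, m₃' = −m₁ − φ·m₂ with m₁ ≡ 0), where m₂, m₃ are differentiable and φ is differentiable with φ(θ) ≠ 0 for all θ. Then f is twice differentiable and satisfies f'' − (φ'/φ)·f' + φ²·f = 0 on ℝ. -/

import Mathlib

/-- Paper's equation (12): in the geodesic Darboux system with `m₁ ≡ 0`,
the function `f` satisfies `f'' - (φ'/φ) f' + φ² f = 0`. -/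
theorem geodesic_m1_eq_zero_f_ode
    (m₂ m₃ f φ : ℝ → ℝ)
    (hm₂ : Differentiable ℝ m₂) (hm₃ : Differentiable ℝ m₃)
    (hφ : Differentiable ℝ φ) (hφ0 : ∀ θ, φ θ ≠ 0)
    (h1 : ∀ θ, m₃ θ = f θ)
    (h2 : ∀ θ, deriv m₂ θ = φ θ * m₃ θ)
    (h3 : ∀ θ, deriv m₃ θ = -(φ θ) * m₂ θ) :
    Differentiable ℝ f ∧ Differentiable ℝ (deriv f) ∧
      ∀ θ, deriv (deriv f) θ - (deriv φ θ / φ θ) * deriv f θ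
          + (φ θ) ^ 2 * f θ = 0 := by
  have hfm : f = m₃ := funext fun θ => (h1 θ).symm
  subst hfm
  have hderiv : deriv f = fun θ => -(φ θ) * m₂ θ := funext fun θ => h3 θ
  have hd2 : Differentiable ℝ (deriv f) := by
    rw [hderiv]; exact (hφ.neg.mul hm₂)
  refine ⟨hm₃, hd2, fun θ => ?_⟩
  have hdd : deriv (deriv f) θ = -(deriv φ θ) * m₂ θ + -(φ θ) * deriv m₂ θ := by
    rw [hderiv]
    have := deriv_mul (c := fun θ => -(φ θ)) (d := m₂)
      (hφ.neg.differentiableAt (x := θ)) (hm₂.differentiableAt (x := θ))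
    simpa [deriv.neg, Pi.mul_def] using this
  rw [hdd, h3, h2, h1]
  field_simp [hφ0 θ]
  ring
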